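/- Let {X_n} satisfy AIM(x_n) with separation sequence q_n and mixing coefficients α_n, suppose n·F̄(x_n) → τ > 0 as n → ∞ with F̄(x_n) > 0 for every n, and let (p_n) be a sequence of positive integers with p_n = o(n), n·α_n = o(p_n) and q_n = o(p_n). Then P(M_n ≤ x_n) − F(x_n)^{n·γ_n} → 0 as n → ∞, where γ_n = (1/n) ∑_{j=1}^{n} P(M_{j,j+p_n} ≤ x_n | X_j > x_n). -/

import Mathlib

open MeasureTheory Filter Finset Asymptotics

/-- Probability of an event as a real number. -/
noncomputable def pr {Ω : Type*} [MeasurableSpace Ω] (P : Measure Ω) (A : Set Ω) : ℝ :=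
  (P A).toReal

/-- The event that `X i ≤ x` for every index `i` in the set `S`;
this is the event `{M(S) ≤ x}` where `M(S) = max {X i : i ∈ S}`. -/
def allLe {Ω : Type*} (X : ℕ → Ω → ℝ) (S : Set ℕ) (x : ℝ) : Set Ω :=
  {ω | ∀ i ∈ S, X i ω ≤ x}

/-- `α` is a sequence of AIM mixing coefficients for `X` relative to thresholds `xs`
with separation sequence `q`: for any two intervals `I₁ = [a,b]`, `I₂ = [b+qₙ+1, c]`
contained in `{1,…,n}`, separated by `qₙ`, each of cardinality at least `qₙ`,
the maximum-based discrepancy is bounded by `α n`. -/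
def AIMBound {Ω : Type*} [MeasurableSpace Ω] (P : Measure Ω) (X : ℕ → Ω → ℝ)
    (xs : ℕ → ℝ) (q : ℕ → ℕ) (α : ℕ → ℝ) : Prop :=
  ∀ n a b c : ℕ, 1 ≤ a → a ≤ b → b + q n + 1 ≤ c → c ≤ n →
    q n ≤ b + 1 - a → q n ≤ c - (b + q n) →
    |pr P (allLe X (Set.Icc a b ∪ Set.Icc (b + q n + 1) c) (xs n)) -
      pr P (allLe X (Set.Icc a b) (xs n)) *
        pr P (allLe X (Set.Icc (b + q n + 1) c) (xs n))| ≤ α n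

set_option linter.unusedSectionVars false
set_option linter.unusedVariables false
section Aux
variable {Ω : Type*} [MeasurableSpace Ω] {P : Measure Ω} [IsProbabilityMeasure P]
variable {X : ℕ → Ω → ℝ} {x : ℝ}

lemma pr_nonneg (A : Set Ω) : 0 ≤ pr P A := ENNReal.toReal_nonneg

lemma pr_mono {A B : Set Ω} (h : A ⊆ B) : pr P A ≤ pr P B :=
  ENNReal.toReal_mono (measure_ne_top P B) (measure_mono h)

lemma pr_le_one (A : Set Ω) : pr P A ≤ 1 := by
  have : pr P A ≤ pr P Set.univ := pr_mono (Set.subset_univ A)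
  simpa [pr] using this

lemma pr_union_le (A B : Set Ω) : pr P (A ∪ B) ≤ pr P A + pr P B := by
  have h := measure_union_le (μ := P) A B
  calc pr P (A ∪ B) ≤ (P A + P B).toReal :=
        ENNReal.toReal_mono (by finiteness) h
    _ = pr P A + pr P B := ENNReal.toReal_add (measure_ne_top _ _) (measure_ne_top _ _)

lemma pr_compl {A : Set Ω} (hA : MeasurableSet A) : pr P Aᶜ = 1 - pr P A := by
  have h : P Aᶜ = 1 - P A := prob_compl_eq_one_sub hA
  rw [pr, h, ENNReal.toReal_sub_of_le prob_le_one (by finiteness)]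
  simp [pr]

lemma pr_biUnion_le (s : Finset ℕ) (f : ℕ → Set Ω) :
    pr P (⋃ i ∈ s, f i) ≤ ∑ i ∈ s, pr P (f i) := by
  have h := measure_biUnion_finset_le (μ := P) s f
  calc pr P (⋃ i ∈ s, f i) ≤ (∑ i ∈ s, P (f i)).toReal :=
        ENNReal.toReal_mono (ENNReal.sum_ne_top.2 fun i _ => measure_ne_top _ _) h
    _ = ∑ i ∈ s, pr P (f i) := ENNReal.toReal_sum fun i _ => measure_ne_top _ _

lemma pr_biUnion_eq (s : Finset ℕ) (f : ℕ → Set Ω)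
    (hd : (↑s : Set ℕ).PairwiseDisjoint f) (hm : ∀ i ∈ s, MeasurableSet (f i)) :
    pr P (⋃ i ∈ s, f i) = ∑ i ∈ s, pr P (f i) := by
  rw [pr, measure_biUnion_finset hd hm]
  exact ENNReal.toReal_sum fun i _ => measure_ne_top _ _

lemma allLe_anti {S T : Set ℕ} (h : S ⊆ T) : allLe X T x ⊆ allLe X S x :=
  fun ω hω i hi => hω i (h hi)

lemma measurableSet_allLe (hm : ∀ i, Measurable (X i)) (S : Set ℕ) :
    MeasurableSet (allLe X S x) := by
  have h : allLe X S x = ⋂ i ∈ S, {ω | X i ω ≤ x} := by ext ω; simp [allLe]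
  rw [h]
  exact MeasurableSet.biInter (Set.to_countable S)
    fun i _ => measurableSet_le (hm i) measurable_const

lemma exceed_eq_compl (i : ℕ) : {ω | x < X i ω} = {ω | X i ω ≤ x}ᶜ := by
  ext ω; simp [not_le]

lemma measurableSet_exceed (hm : ∀ i, Measurable (X i)) (i : ℕ) :
    MeasurableSet {ω | x < X i ω} := by
  rw [exceed_eq_compl]
  exact (measurableSet_le (hm i) measurable_const).compl

end Aux

section Main
variable {Ω : Type*} [MeasurableSpace Ω] {P : Measure Ω} [IsProbabilityMeasure P]
variable {X : ℕ → Ω → ℝ} {x : ℝ} {F : ℝ → ℝ}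

lemma pr_exceed (hm : ∀ i, Measurable (X i))
    (hF : ∀ i, 1 ≤ i → ∀ t : ℝ, pr P {ω | X i ω ≤ t} = F t)
    {i : ℕ} (hi : 1 ≤ i) : pr P {ω | x < X i ω} = 1 - F x := by
  rw [exceed_eq_compl, pr_compl (measurableSet_le (hm i) measurable_const), hF i hi]

/-- Removing the indices in `s` from the index set increases the probability by
at most `card s · F̄`. -/
lemma pr_allLe_sub (hm : ∀ i, Measurable (X i))
    (hF : ∀ i, 1 ≤ i → ∀ t : ℝ, pr P {ω | X i ω ≤ t} = F t)
    {S T : Set ℕ} (hST : S ⊆ T) (s : Finset ℕ) (hTS : T \ S ⊆ ↑s)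
    (h1 : ∀ i ∈ s, 1 ≤ i) :
    pr P (allLe X S x) - pr P (allLe X T x) ≤ s.card * (1 - F x) := by
  have hsub : allLe X S x ⊆ allLe X T x ∪ ⋃ i ∈ s, {ω | x < X i ω} := by
    intro ω hω
    by_cases hc : ∀ i ∈ s, X i ω ≤ x
    · left
      intro i hiT
      by_cases hiS : i ∈ S
      · exact hω i hiS
      · exact hc i (hTS ⟨hiT, hiS⟩)
    · right
      push_neg at hc
      obtain ⟨i, his, hxi⟩ := hc
      exact Set.mem_biUnion his (by simpa using hxi)
  have h1' : pr P (allLe X S x) ≤ pr P (allLe X T x) + pr P (⋃ i ∈ s, {ω | x < X i ω}) :=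
    le_trans (pr_mono hsub) (pr_union_le _ _)
  have h2 : pr P (⋃ i ∈ s, {ω | x < X i ω}) ≤ (s.card : ℝ) * (1 - F x) := by
    calc pr P (⋃ i ∈ s, {ω | x < X i ω}) ≤ ∑ i ∈ s, pr P {ω | x < X i ω} :=
          pr_biUnion_le s _
      _ = ∑ _i ∈ s, (1 - F x) := Finset.sum_congr rfl fun i hi => pr_exceed hm hF (h1 i hi)
      _ = (s.card : ℝ) * (1 - F x) := by rw [Finset.sum_const, nsmul_eq_mul]
  linarith

/-- Decomposition by the position of the last exceedance. -/
lemma one_sub_pr_allLe_Icc (hm : ∀ i, Measurable (X i)) (a b : ℕ) :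
    1 - pr P (allLe X (Set.Icc a b) x) =
      ∑ j ∈ Finset.Icc a b, pr P ({ω | x < X j ω} ∩ allLe X (Set.Icc (j + 1) b) x) := by
  have hcomp : (allLe X (Set.Icc a b) x)ᶜ =
      ⋃ j ∈ Finset.Icc a b, ({ω | x < X j ω} ∩ allLe X (Set.Icc (j + 1) b) x) := by
    ext ω
    simp only [Set.mem_compl_iff, allLe, Set.mem_setOf_eq, not_forall, Set.mem_iUnion,
      Set.mem_inter_iff, Finset.mem_Icc, Set.mem_Icc, exists_prop]
    constructor
    · rintro ⟨i, hi, hxi⟩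
      have hxi' : x < X i ω := lt_of_not_ge hxi
      set t := (Finset.Icc a b).filter (fun j => x < X j ω) with ht
      have hts : t.Nonempty := ⟨i, by simp [ht, Finset.mem_Icc, hi.1, hi.2, hxi']⟩
      obtain ⟨hj1, hj2⟩ := Finset.mem_filter.1 (t.max'_mem hts)
      refine ⟨t.max' hts, Finset.mem_Icc.1 hj1, hj2, ?_⟩
      intro l hl
      by_contra hxl
      have hxl' : x < X l ω := lt_of_not_ge hxl
      have hlt : l ∈ t := by
        refine Finset.mem_filter.2 ⟨Finset.mem_Icc.2 ⟨?_, hl.2⟩, hxl'⟩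
        exact le_trans (Finset.mem_Icc.1 hj1).1 (le_trans (Nat.le_succ _) hl.1)
      have := Finset.le_max' t l hlt
      omega
    · rintro ⟨j, hj, hxj, -⟩
      exact ⟨j, ⟨hj.1, hj.2⟩, not_le.2 hxj⟩
  have hdis : (↑(Finset.Icc a b) : Set ℕ).PairwiseDisjoint
      (fun j => {ω | x < X j ω} ∩ allLe X (Set.Icc (j + 1) b) x) := by
    intro i hi j hj hij
    simp only [Finset.coe_Icc, Set.mem_Icc] at hi hj
    rcases lt_or_gt_of_ne hij with h | h
    · exact Set.disjoint_left.2 fun ω hωi hωj =>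
        absurd (hωi.2 j (Set.mem_Icc.2 ⟨h, hj.2⟩)) (not_le.2 hωj.1)
    · exact Set.disjoint_left.2 fun ω hωi hωj =>
        absurd (hωj.2 i (Set.mem_Icc.2 ⟨h, hi.2⟩)) (not_le.2 hωi.1)
  have hmeas' : ∀ j ∈ Finset.Icc a b,
      MeasurableSet ({ω | x < X j ω} ∩ allLe X (Set.Icc (j + 1) b) x) :=
    fun j _ => (measurableSet_exceed hm j).inter (measurableSet_allLe hm _)
  have hc := pr_compl (P := P) (measurableSet_allLe hm (X := X) (x := x) (Set.Icc a b))
  rw [← hc, hcomp, pr_biUnion_eq _ _ hdis hmeas']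
end Main

section Blocking
variable {Ω : Type*} [MeasurableSpace Ω] {P : Measure Ω} [IsProbabilityMeasure P]
variable {X : ℕ → Ω → ℝ} {F : ℝ → ℝ} {xs : ℕ → ℝ} {q : ℕ → ℕ} {α : ℕ → ℝ}

lemma blocking (hm : ∀ i, Measurable (X i))
    (hF : ∀ i, 1 ≤ i → ∀ t : ℝ, pr P {ω | X i ω ≤ t} = F t)
    (hbd : AIMBound P X xs q α)
    (n L : ℕ) (hq1 : 1 ≤ q n) (h2q : 2 * q n ≤ L)
    (hFb : 0 ≤ 1 - F (xs n)) :
    ∀ m : ℕ, 1 ≤ m → m * L ≤ n →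
      |pr P (allLe X (Set.Icc (q n + 1) (m * L)) (xs n)) -
        ∏ i ∈ Finset.Icc 1 m,
          pr P (allLe X (Set.Icc ((i - 1) * L + q n + 1) (i * L)) (xs n))|
        ≤ ((m - 1 : ℕ) : ℝ) * (|α n| + (q n : ℝ) * (1 - F (xs n))) := by
  refine Nat.le_induction ?_ ?_
  · intro h1L
    simp [Finset.Icc_self]
  · intro m hm1 IH hstep
    have hexp : (m + 1) * L = m * L + L := by ring
    have hLm : L ≤ m * L := by
      calc L = 1 * L := (one_mul L).symm
        _ ≤ m * L := Nat.mul_le_mul_right L hm1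
    have hmL : m * L ≤ n := le_trans (by omega) hstep
    have IH' := IH hmL
    set Fb := 1 - F (xs n) with hFbdef
    set A := pr P (allLe X (Set.Icc (q n + 1) ((m + 1) * L)) (xs n)) with hA
    set B := pr P (allLe X
      (Set.Icc (q n + 1) (m * L) ∪ Set.Icc (m * L + q n + 1) ((m + 1) * L)) (xs n)) with hB
    set C := pr P (allLe X (Set.Icc (q n + 1) (m * L)) (xs n)) with hC
    set gm := pr P (allLe X (Set.Icc (m * L + q n + 1) ((m + 1) * L)) (xs n)) with hgm
    set Pi := ∏ i ∈ Finset.Icc 1 m,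
      pr P (allLe X (Set.Icc ((i - 1) * L + q n + 1) (i * L)) (xs n)) with hPi
    -- step 1 : |A - B| ≤ q·Fb
    have hsub : (Set.Icc (q n + 1) (m * L) ∪ Set.Icc (m * L + q n + 1) ((m + 1) * L) : Set ℕ)
        ⊆ Set.Icc (q n + 1) ((m + 1) * L) := by
      intro i hi
      simp only [Set.mem_union, Set.mem_Icc] at hi ⊢
      omega
    have hdiffsub : (Set.Icc (q n + 1) ((m + 1) * L) : Set ℕ) \
        (Set.Icc (q n + 1) (m * L) ∪ Set.Icc (m * L + q n + 1) ((m + 1) * L))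
        ⊆ ↑(Finset.Icc (m * L + 1) (m * L + q n)) := by
      intro i hi
      simp only [Set.mem_diff, Set.mem_union, Set.mem_Icc, Finset.coe_Icc] at hi ⊢
      omega
    have hBA : B - A ≤ ((Finset.Icc (m * L + 1) (m * L + q n)).card : ℝ) * Fb :=
      pr_allLe_sub hm hF hsub _ hdiffsub (fun i hi => by
        simp only [Finset.mem_Icc] at hi; omega)
    have hcard : ((Finset.Icc (m * L + 1) (m * L + q n)).card : ℝ) = (q n : ℝ) := by
      rw [Nat.card_Icc]; congr 1; omega
    have hAB : A ≤ B := pr_mono (allLe_anti hsub)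
    rw [hcard] at hBA
    have hqFb : 0 ≤ (q n : ℝ) * Fb := mul_nonneg (Nat.cast_nonneg _) hFb
    have h1 : |A - B| ≤ (q n : ℝ) * Fb := by
      rw [abs_le]
      exact ⟨by linarith, by linarith⟩
    -- step 2 : AIM bound
    have h2 : |B - C * gm| ≤ |α n| := by
      have := hbd n (q n + 1) (m * L) ((m + 1) * L)
        (by omega) (by omega) (by omega) hstep (by omega) (by omega)
      exact le_trans this (le_abs_self _)
    -- step 3 : IH
    have hgm0 : 0 ≤ gm := pr_nonneg _
    have hgm1 : gm ≤ 1 := pr_le_one _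
    have hprod : ∏ i ∈ Finset.Icc 1 (m + 1),
        pr P (allLe X (Set.Icc ((i - 1) * L + q n + 1) (i * L)) (xs n)) = Pi * gm := by
      rw [Finset.prod_Icc_succ_top (by omega : 1 ≤ m + 1), Nat.add_sub_cancel]
    rw [hprod]
    have h3 : |C * gm - Pi * gm| ≤ ((m - 1 : ℕ) : ℝ) * (|α n| + (q n : ℝ) * Fb) := by
      rw [← sub_mul, abs_mul]
      calc |C - Pi| * |gm| ≤ |C - Pi| * 1 := by
            apply mul_le_mul_of_nonneg_left _ (abs_nonneg _)
            rw [abs_of_nonneg hgm0]; exact hgm1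
        _ = |C - Pi| := mul_one _
        _ ≤ _ := IH'
    have hcast : ((m + 1 - 1 : ℕ) : ℝ) = ((m - 1 : ℕ) : ℝ) + 1 := by
      have : m + 1 - 1 = (m - 1) + 1 := by omega
      rw [this]; push_cast; ring
    calc |A - Pi * gm| ≤ |A - B| + (|B - C * gm| + |C * gm - Pi * gm|) := by
          have t1 := abs_sub_le A B (Pi * gm)
          have t2 := abs_sub_le B (C * gm) (Pi * gm)
          linarith
      _ ≤ (q n : ℝ) * Fb + |α n| + ((m - 1 : ℕ) : ℝ) * (|α n| + (q n : ℝ) * Fb) := by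
          linarith
      _ ≤ ((m + 1 - 1 : ℕ) : ℝ) * (|α n| + (q n : ℝ) * Fb) := by
          rw [hcast]; ring_nf; nlinarith [abs_nonneg (α n)]
end Blocking

section Analytic

lemma exp_neg_lip {a b : ℝ} (ha : 0 ≤ a) (hb : 0 ≤ b) :
    |Real.exp (-a) - Real.exp (-b)| ≤ |a - b| := by
  wlog hab : b ≤ a generalizing a b
  · rw [abs_sub_comm, abs_sub_comm a b]; exact this hb ha (le_of_not_ge hab)
  rw [abs_of_nonpos (by simp [Real.exp_le_exp]; linarith), abs_of_nonneg (by linarith)]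
  have h1 : Real.exp (-a) = Real.exp (-b) * Real.exp (-(a - b)) := by
    rw [← Real.exp_add]; ring_nf
  have h2 : 1 - (a - b) ≤ Real.exp (-(a - b)) := by
    have := Real.add_one_le_exp (-(a - b)); linarith
  have h3 : Real.exp (-b) ≤ 1 := Real.exp_le_one_iff.2 (by linarith)
  have h4 : 0 < Real.exp (-b) := Real.exp_pos _
  have h5 : Real.exp (-(a - b)) ≤ 1 := Real.exp_le_one_iff.2 (by linarith)
  calc -(Real.exp (-a) - Real.exp (-b)) = Real.exp (-b) * (1 - Real.exp (-(a - b))) := by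
        rw [h1]; ring
    _ ≤ 1 * (a - b) := mul_le_mul h3 (by linarith) (by linarith) zero_le_one
    _ = a - b := one_mul _

lemma exp_neg_le_quad {d : ℝ} (hd : 0 ≤ d) : Real.exp (-d) ≤ 1 - d + d ^ 2 := by
  have h1 : 1 + d ≤ Real.exp d := by have := Real.add_one_le_exp d; linarith
  have h2 : 0 < Real.exp d := Real.exp_pos d
  have h3 : Real.exp (-d) = (Real.exp d)⁻¹ := Real.exp_neg d
  rw [h3]
  have h4 : (Real.exp d)⁻¹ ≤ (1 + d)⁻¹ := by
    apply inv_anti₀ (by linarith) h1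
  have h5 : (1 + d)⁻¹ ≤ 1 - d + d ^ 2 := by
    rw [inv_le_iff_one_le_mul₀ (by linarith)]
    nlinarith
  linarith

lemma one_sub_le_exp_neg' (d : ℝ) : 1 - d ≤ Real.exp (-d) := by
  have := Real.add_one_le_exp (-d); linarith

lemma exp_le_one_add_two_mul {m : ℝ} (h0 : 0 ≤ m) (h1 : m ≤ 1 / 2) :
    Real.exp m ≤ 1 + 2 * m := by
  have h2 : 1 - m ≤ Real.exp (-m) := one_sub_le_exp_neg' m
  have h3 : Real.exp m * Real.exp (-m) = 1 := by rw [← Real.exp_add]; simp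
  have h4 : 0 < Real.exp m := Real.exp_pos m
  nlinarith

lemma prod_one_sub_le_exp {ι : Type*} (s : Finset ι) (d : ι → ℝ)
    (h1 : ∀ i ∈ s, d i ≤ 1) :
    ∏ i ∈ s, (1 - d i) ≤ Real.exp (-∑ i ∈ s, d i) := by
  have heq : Real.exp (-∑ i ∈ s, d i) = ∏ i ∈ s, Real.exp (-d i) := by
    rw [← Real.exp_sum, Finset.sum_neg_distrib]
  rw [heq]
  exact Finset.prod_le_prod (fun i hi => by linarith [h1 i hi])
    (fun i hi => one_sub_le_exp_neg' (d i))

lemma abs_prod_sub_exp {ι : Type*} (s : Finset ι) (d : ι → ℝ)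
    (h0 : ∀ i ∈ s, 0 ≤ d i) (h1 : ∀ i ∈ s, d i ≤ 1) :
    |∏ i ∈ s, (1 - d i) - Real.exp (-∑ i ∈ s, d i)| ≤ ∑ i ∈ s, (d i) ^ 2 := by
  classical
  induction s using Finset.induction_on with
  | empty => simp
  | insert a t hnotmem ih =>
    have h0a : 0 ≤ d a := h0 a (Finset.mem_insert_self a t)
    have h1a : d a ≤ 1 := h1 a (Finset.mem_insert_self a t)
    have ih' := ih (fun i hi => h0 i (Finset.mem_insert_of_mem hi))
      (fun i hi => h1 i (Finset.mem_insert_of_mem hi))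
    rw [Finset.prod_insert hnotmem, Finset.sum_insert hnotmem, Finset.sum_insert hnotmem]
    have hPt0 : 0 ≤ ∏ i ∈ t, (1 - d i) :=
      Finset.prod_nonneg fun i hi => by linarith [h1 i (Finset.mem_insert_of_mem hi)]
    have hPt1 : ∏ i ∈ t, (1 - d i) ≤ 1 :=
      Finset.prod_le_one (fun i hi => by linarith [h1 i (Finset.mem_insert_of_mem hi)])
        (fun i hi => by linarith [h0 i (Finset.mem_insert_of_mem hi)])
    have hea : Real.exp (-(d a + ∑ i ∈ t, d i)) = Real.exp (-d a) * Real.exp (-∑ i ∈ t, d i) := by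
      rw [← Real.exp_add]; ring_nf
    have hexp0 : 0 < Real.exp (-d a) := Real.exp_pos _
    have hexp1 : Real.exp (-d a) ≤ 1 := Real.exp_le_one_iff.2 (by linarith)
    have hfac : |(1 - d a) - Real.exp (-d a)| ≤ (d a) ^ 2 := by
      rw [abs_le]
      constructor
      · have := exp_neg_le_quad h0a; nlinarith
      · have := one_sub_le_exp_neg' (d a); nlinarith
    calc |(1 - d a) * ∏ i ∈ t, (1 - d i) - Real.exp (-(d a + ∑ i ∈ t, d i))|
        = |((1 - d a) - Real.exp (-d a)) * ∏ i ∈ t, (1 - d i)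
            + Real.exp (-d a) * (∏ i ∈ t, (1 - d i) - Real.exp (-∑ i ∈ t, d i))| := by
          rw [hea]; ring_nf
      _ ≤ |((1 - d a) - Real.exp (-d a)) * ∏ i ∈ t, (1 - d i)|
            + |Real.exp (-d a) * (∏ i ∈ t, (1 - d i) - Real.exp (-∑ i ∈ t, d i))| :=
          abs_add_le _ _
      _ ≤ (d a) ^ 2 * 1 + 1 * ∑ i ∈ t, (d i) ^ 2 := by
          rw [abs_mul, abs_mul]
          have e1 : |(1 - d a) - Real.exp (-d a)| * |∏ i ∈ t, (1 - d i)| ≤ (d a) ^ 2 * 1 := by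
            apply mul_le_mul hfac _ (abs_nonneg _) (sq_nonneg _)
            rw [abs_of_nonneg hPt0]; exact hPt1
          have e2 : |Real.exp (-d a)| * |∏ i ∈ t, (1 - d i) - Real.exp (-∑ i ∈ t, d i)|
              ≤ 1 * ∑ i ∈ t, (d i) ^ 2 := by
            apply mul_le_mul _ ih' (abs_nonneg _) zero_le_one
            rw [abs_of_nonneg hexp0.le]; exact hexp1
          linarith
      _ = (d a) ^ 2 + ∑ i ∈ t, (d i) ^ 2 := by ring

lemma neg_div_le_log_one_sub {u : ℝ} (h0 : 0 < u) (h1 : u < 1) :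
    -u / (1 - u) ≤ Real.log (1 - u) ∧ Real.log (1 - u) ≤ -u := by
  have h1u : 0 < 1 - u := by linarith
  constructor
  · have h2 : Real.log (1 - u)⁻¹ ≤ (1 - u)⁻¹ - 1 := by
      have := Real.log_le_sub_one_of_pos (inv_pos.2 h1u)
      linarith
    rw [Real.log_inv] at h2
    have h3 : (1 - u)⁻¹ - 1 = u / (1 - u) := by field_simp; ring
    rw [h3] at h2
    rw [neg_div]
    linarith
  · have := Real.log_le_sub_one_of_pos h1u; linarith

end Analytic

section Sums
variable {Ω : Type*} [MeasurableSpace Ω] {P : Measure Ω} [IsProbabilityMeasure P]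
variable {X : ℕ → Ω → ℝ} {F : ℝ → ℝ} {xs : ℕ → ℝ} {q : ℕ → ℕ} {p : ℕ → ℕ}

/-- Each block contribution `1 - P(M(Jᵢ) ≤ x)` is at most `card·F̄`. -/
lemma one_sub_block_le (hm : ∀ i, Measurable (X i))
    (hF : ∀ i, 1 ≤ i → ∀ t : ℝ, pr P {ω | X i ω ≤ t} = F t)
    (x : ℝ) {a b : ℕ} (ha : 1 ≤ a) :
    1 - pr P (allLe X (Set.Icc a b) x) ≤ ((b + 1 - a : ℕ) : ℝ) * (1 - F x) := by
  rw [one_sub_pr_allLe_Icc hm a b]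
  calc ∑ j ∈ Finset.Icc a b, pr P ({ω | x < X j ω} ∩ allLe X (Set.Icc (j + 1) b) x)
      ≤ ∑ j ∈ Finset.Icc a b, (1 - F x) := by
        apply Finset.sum_le_sum
        intro j hj
        rw [Finset.mem_Icc] at hj
        calc pr P ({ω | x < X j ω} ∩ allLe X (Set.Icc (j + 1) b) x)
            ≤ pr P {ω | x < X j ω} := pr_mono Set.inter_subset_left
          _ = 1 - F x := pr_exceed hm hF (by omega)
    _ = ((b + 1 - a : ℕ) : ℝ) * (1 - F x) := by
        rw [Finset.sum_const, nsmul_eq_mul, Nat.card_Icc]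

/-- Block sums at scale `p` dominate `S` up to boundary terms. -/
lemma S_le_sumD (hm : ∀ i, Measurable (X i))
    (hF : ∀ i, 1 ≤ i → ∀ t : ℝ, pr P {ω | X i ω ≤ t} = F t)
    (n : ℕ) (hq1 : 1 ≤ q n) (hqp' : q n ≤ p n) (hpn : p n ≤ n) (hp1 : 1 ≤ p n)
    (hFb : 0 ≤ 1 - F (xs n)) :
    (∑ j ∈ Finset.Icc 1 n, pr P ({ω | xs n < X j ω} ∩
        allLe X (Set.Icc (j + 1) (j + p n)) (xs n)))
      ≤ (∑ i ∈ Finset.Icc 1 (n / p n),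
          (1 - pr P (allLe X
            (Set.Icc ((i - 1) * p n + q n + 1) (i * p n)) (xs n))))
        + (((n / p n) * q n + p n : ℕ) : ℝ) * (1 - F (xs n)) := by
  set pp := p n with hpp
  set qq := q n with hqq
  set x := xs n with hx
  set k := n / pp with hk
  set Fb := 1 - F x with hFbdef
  set e : ℕ → ℝ := fun j => pr P ({ω | x < X j ω} ∩ allLe X (Set.Icc (j + 1) (j + pp)) x)
    with he
  set J : ℕ → Finset ℕ := fun i => Finset.Icc ((i - 1) * pp + qq + 1) (i * pp) with hJ
  have key : ∀ {a b : ℕ}, a < b → Disjoint (J a) (J b) := by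
    intro a b hab
    rw [Finset.disjoint_left]
    intro j hj hj'
    simp only [hJ, Finset.mem_Icc] at hj hj'
    have hmul : a * pp ≤ (b - 1) * pp := Nat.mul_le_mul_right pp (by omega)
    omega
  have hdisj : (↑(Finset.Icc 1 k) : Set ℕ).PairwiseDisjoint J := by
    intro i _ i' _ hne
    rcases hne.lt_or_gt with h | h
    · exact key h
    · exact (key h).symm
  set U := (Finset.Icc 1 k).biUnion J with hU
  have hUsub : U ⊆ Finset.Icc 1 n := by
    intro j hj
    rw [hU, Finset.mem_biUnion] at hj
    obtain ⟨i, hi, hji⟩ := hj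
    rw [Finset.mem_Icc] at hi
    simp only [hJ, Finset.mem_Icc] at hji
    have h1 : i * pp ≤ k * pp := Nat.mul_le_mul_right pp hi.2
    have h2 : k * pp ≤ n := Nat.div_mul_le_self n pp
    rw [Finset.mem_Icc]
    omega
  -- split sum over Icc 1 n
  have hsplit : ∑ j ∈ Finset.Icc 1 n, e j
      = ∑ j ∈ Finset.Icc 1 n \ U, e j + ∑ j ∈ U, e j :=
    (Finset.sum_sdiff hUsub).symm
  -- missing part bound
  have hcardJ : ∀ i ∈ Finset.Icc 1 k, (J i).card = pp - qq := by
    intro i hi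
    rw [Finset.mem_Icc] at hi
    obtain ⟨r, rfl⟩ : ∃ r, i = r + 1 := ⟨i - 1, by omega⟩
    simp only [hJ, Nat.card_Icc, Nat.add_sub_cancel]
    have : (r + 1) * pp = r * pp + pp := by ring
    omega
  have hcardU : U.card = k * (pp - qq) := by
    rw [hU, Finset.card_biUnion hdisj]
    rw [Finset.sum_congr rfl hcardJ, Finset.sum_const, Nat.card_Icc, smul_eq_mul,
      Nat.add_sub_cancel]
  have hmiss : ((Finset.Icc 1 n \ U).card : ℝ) ≤ ((k * qq + pp : ℕ) : ℝ) := by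
    have hc : (Finset.Icc 1 n \ U).card = n - k * (pp - qq) := by
      rw [Finset.card_sdiff_of_subset hUsub, hcardU, Nat.card_Icc]
      omega
    have hmod : k * pp + n % pp = n := by
      rw [hk, Nat.mul_comm]
      exact Nat.div_add_mod n pp
    have hlt : n % pp < pp := Nat.mod_lt n (by omega)
    have hdistrib : k * (pp - qq) + k * qq = k * pp := by
      rw [← Nat.mul_add]
      congr 1
      omega
    have h5 : n - k * (pp - qq) ≤ k * qq + pp := by omega
    rw [hc]
    exact Nat.cast_le.mpr h5
  have hmissing : ∑ j ∈ Finset.Icc 1 n \ U, e j ≤ ((k * qq + pp : ℕ) : ℝ) * Fb := by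
    calc ∑ j ∈ Finset.Icc 1 n \ U, e j ≤ ∑ j ∈ Finset.Icc 1 n \ U, Fb := by
          apply Finset.sum_le_sum
          intro j hj
          have hj1 : 1 ≤ j := by
            have := Finset.mem_sdiff.1 hj
            have := Finset.mem_Icc.1 this.1
            omega
          calc e j ≤ pr P {ω | x < X j ω} := pr_mono Set.inter_subset_left
            _ = Fb := pr_exceed hm hF hj1
      _ = ((Finset.Icc 1 n \ U).card : ℝ) * Fb := by
          rw [Finset.sum_const, nsmul_eq_mul]
      _ ≤ ((k * qq + pp : ℕ) : ℝ) * Fb := by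
          apply mul_le_mul_of_nonneg_right hmiss hFb
  -- main part bound
  have hmain : ∑ j ∈ U, e j ≤ ∑ i ∈ Finset.Icc 1 k,
      (1 - pr P (allLe X (Set.Icc ((i - 1) * pp + qq + 1) (i * pp)) x)) := by
    rw [hU, Finset.sum_biUnion hdisj]
    apply Finset.sum_le_sum
    intro i hi
    rw [Finset.mem_Icc] at hi
    rw [one_sub_pr_allLe_Icc hm ((i - 1) * pp + qq + 1) (i * pp)]
    apply Finset.sum_le_sum
    intro j hj
    simp only [hJ, Finset.mem_Icc] at hj
    apply pr_mono
    apply Set.inter_subset_inter_right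
    apply allLe_anti
    apply Set.Icc_subset_Icc le_rfl
    obtain ⟨r, rfl⟩ : ∃ r, i = r + 1 := ⟨i - 1, by omega⟩
    simp only [Nat.add_sub_cancel] at hj
    have : (r + 1) * pp = r * pp + pp := by ring
    omega
  calc ∑ j ∈ Finset.Icc 1 n, e j
      = ∑ j ∈ Finset.Icc 1 n \ U, e j + ∑ j ∈ U, e j := hsplit
    _ ≤ ((k * qq + pp : ℕ) : ℝ) * Fb + ∑ i ∈ Finset.Icc 1 k,
          (1 - pr P (allLe X (Set.Icc ((i - 1) * pp + qq + 1) (i * pp)) x)) := by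
        exact add_le_add hmissing hmain
    _ = _ := by ring

/-- Block sums at scale `L` are dominated by `S` plus boundary terms. -/
lemma sumD_le_S (hm : ∀ i, Measurable (X i))
    (hF : ∀ i, 1 ≤ i → ∀ t : ℝ, pr P {ω | X i ω ≤ t} = F t)
    (n L : ℕ) (hq1 : 1 ≤ q n) (hL1 : 1 ≤ L) (hLn : L ≤ n)
    (hFb : 0 ≤ 1 - F (xs n)) :
    (∑ i ∈ Finset.Icc 1 (n / L),
        (1 - pr P (allLe X (Set.Icc ((i - 1) * L + q n + 1) (i * L)) (xs n))))
      ≤ (∑ j ∈ Finset.Icc 1 n, pr P ({ω | xs n < X j ω} ∩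
          allLe X (Set.Icc (j + 1) (j + p n)) (xs n)))
        + (((n / L) * p n : ℕ) : ℝ) * (1 - F (xs n)) := by
  set pp := p n with hpp
  set qq := q n with hqq
  set x := xs n with hx
  set k := n / L with hk
  set Fb := 1 - F x with hFbdef
  set e : ℕ → ℝ := fun j => pr P ({ω | x < X j ω} ∩ allLe X (Set.Icc (j + 1) (j + pp)) x)
    with he
  set J : ℕ → Finset ℕ := fun i => Finset.Icc ((i - 1) * L + qq + 1) (i * L) with hJ
  have key : ∀ {a b : ℕ}, a < b → Disjoint (J a) (J b) := by
    intro a b hab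
    rw [Finset.disjoint_left]
    intro j hj hj'
    simp only [hJ, Finset.mem_Icc] at hj hj'
    have hmul : a * L ≤ (b - 1) * L := Nat.mul_le_mul_right L (by omega)
    omega
  set Ji : ℕ → Finset ℕ := fun i => (J i).filter (fun j => j + pp ≤ i * L) with hJi
  have hdisj : (↑(Finset.Icc 1 k) : Set ℕ).PairwiseDisjoint Ji := by
    intro i _ i' _ hne
    have : Disjoint (J i) (J i') := by
      rcases hne.lt_or_gt with h | h
      · exact key h
      · exact (key h).symm
    exact this.mono (Finset.filter_subset _ _) (Finset.filter_subset _ _)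
  -- per block bound
  have hblock : ∀ i ∈ Finset.Icc 1 k,
      1 - pr P (allLe X (Set.Icc ((i - 1) * L + qq + 1) (i * L)) x)
        ≤ ∑ j ∈ Ji i, e j + (pp : ℝ) * Fb := by
    intro i hi
    rw [Finset.mem_Icc] at hi
    rw [one_sub_pr_allLe_Icc hm ((i - 1) * L + qq + 1) (i * L)]
    rw [← Finset.sum_filter_add_sum_filter_not (J i) (fun j => j + pp ≤ i * L)]
    apply add_le_add
    · apply Finset.sum_le_sum
      intro j hj
      rw [Finset.mem_filter] at hj
      apply pr_mono
      apply Set.inter_subset_inter_right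
      apply allLe_anti
      exact Set.Icc_subset_Icc le_rfl hj.2
    · calc ∑ j ∈ (J i).filter (fun j => ¬ j + pp ≤ i * L),
            pr P ({ω | x < X j ω} ∩ allLe X (Set.Icc (j + 1) (i * L)) x)
          ≤ ∑ j ∈ (J i).filter (fun j => ¬ j + pp ≤ i * L), Fb := by
            apply Finset.sum_le_sum
            intro j hj
            have hj' := Finset.mem_filter.1 hj
            simp only [hJ, Finset.mem_Icc] at hj'
            calc pr P ({ω | x < X j ω} ∩ allLe X (Set.Icc (j + 1) (i * L)) x)
                ≤ pr P {ω | x < X j ω} := pr_mono Set.inter_subset_left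
              _ = Fb := pr_exceed hm hF (by omega)
        _ = (((J i).filter (fun j => ¬ j + pp ≤ i * L)).card : ℝ) * Fb := by
            rw [Finset.sum_const, nsmul_eq_mul]
        _ ≤ (pp : ℝ) * Fb := by
            apply mul_le_mul_of_nonneg_right _ hFb
            have hsub : (J i).filter (fun j => ¬ j + pp ≤ i * L)
                ⊆ Finset.Icc (i * L + 1 - pp) (i * L) := by
              intro j hj
              have hj' := Finset.mem_filter.1 hj
              simp only [hJ, Finset.mem_Icc] at hj'
              rw [Finset.mem_Icc]
              omega
            have := Finset.card_le_card hsub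
            have hcard : (Finset.Icc (i * L + 1 - pp) (i * L)).card ≤ pp := by
              rw [Nat.card_Icc]; omega
            exact_mod_cast le_trans this hcard
  -- filtered union subset
  have hUsub : (Finset.Icc 1 k).biUnion Ji ⊆ Finset.Icc 1 n := by
    intro j hj
    rw [Finset.mem_biUnion] at hj
    obtain ⟨i, hi, hji⟩ := hj
    rw [Finset.mem_Icc] at hi
    have hji' := Finset.mem_filter.1 hji
    simp only [hJ, Finset.mem_Icc] at hji'
    have h1 : i * L ≤ k * L := Nat.mul_le_mul_right L hi.2
    have h2 : k * L ≤ n := Nat.div_mul_le_self n L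
    rw [Finset.mem_Icc]
    omega
  have hfin : ∑ i ∈ Finset.Icc 1 k, ∑ j ∈ Ji i, e j ≤ ∑ j ∈ Finset.Icc 1 n, e j := by
    rw [← Finset.sum_biUnion hdisj]
    apply Finset.sum_le_sum_of_subset_of_nonneg hUsub
    intro j _ _
    exact pr_nonneg _
  calc ∑ i ∈ Finset.Icc 1 k,
        (1 - pr P (allLe X (Set.Icc ((i - 1) * L + qq + 1) (i * L)) x))
      ≤ ∑ i ∈ Finset.Icc 1 k, (∑ j ∈ Ji i, e j + (pp : ℝ) * Fb) :=
        Finset.sum_le_sum hblock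
    _ = (∑ i ∈ Finset.Icc 1 k, ∑ j ∈ Ji i, e j) + (k : ℝ) * ((pp : ℝ) * Fb) := by
        rw [Finset.sum_add_distrib, Finset.sum_const, nsmul_eq_mul, Nat.card_Icc,
          Nat.add_sub_cancel]
    _ ≤ (∑ j ∈ Finset.Icc 1 n, e j) + (((k * pp : ℕ)) : ℝ) * Fb := by
        push_cast
        have := hfin
        linarith
end Sums

section Key
variable {Ω : Type*} [MeasurableSpace Ω] {P : Measure Ω} [IsProbabilityMeasure P]
variable {X : ℕ → Ω → ℝ} {F : ℝ → ℝ} {xs : ℕ → ℝ} {q : ℕ → ℕ} {α : ℕ → ℝ} {p : ℕ → ℕ}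

lemma key_upper (hm : ∀ i, Measurable (X i))
    (hF : ∀ i, 1 ≤ i → ∀ t : ℝ, pr P {ω | X i ω ≤ t} = F t)
    (hbd : AIMBound P X xs q α)
    (n : ℕ) (hq1 : 1 ≤ q n) (h2q : 2 * q n ≤ p n) (hpn : p n ≤ n)
    (hFb0 : 0 ≤ 1 - F (xs n))
    (hm0 : (((n / p n) * q n + p n : ℕ) : ℝ) * (1 - F (xs n)) ≤ 1 / 2) :
    pr P (allLe X (Set.Icc 1 n) (xs n))
      ≤ Real.exp (-(∑ j ∈ Finset.Icc 1 n, pr P ({ω | xs n < X j ω} ∩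
            allLe X (Set.Icc (j + 1) (j + p n)) (xs n))))
        + ((n / p n : ℕ) : ℝ) * (|α n| + (q n : ℝ) * (1 - F (xs n)))
        + 2 * ((((n / p n) * q n + p n : ℕ) : ℝ) * (1 - F (xs n))) := by
  set Fb := 1 - F (xs n) with hFbdef
  set k := n / p n with hk
  set S := ∑ j ∈ Finset.Icc 1 n, pr P ({ω | xs n < X j ω} ∩
      allLe X (Set.Icc (j + 1) (j + p n)) (xs n)) with hS
  set g : ℕ → ℝ := fun i =>
    pr P (allLe X (Set.Icc ((i - 1) * p n + q n + 1) (i * p n)) (xs n)) with hg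
  have hk1 : 1 ≤ k := (Nat.one_le_div_iff (by omega)).2 hpn
  have hkp : k * p n ≤ n := Nat.div_mul_le_self n (p n)
  have hg0 : ∀ i, 0 ≤ g i := fun i => pr_nonneg _
  have h1 : pr P (allLe X (Set.Icc 1 n) (xs n))
      ≤ pr P (allLe X (Set.Icc (q n + 1) (k * p n)) (xs n)) :=
    pr_mono (allLe_anti (Set.Icc_subset_Icc (by omega) hkp))
  have h2 := blocking hm hF hbd n (p n) hq1 h2q hFb0 k hk1 hkp
  rw [← hFbdef] at h2
  have h3 : ∏ i ∈ Finset.Icc 1 k, g i ≤ Real.exp (-(∑ i ∈ Finset.Icc 1 k, (1 - g i))) := by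
    have := prod_one_sub_le_exp (Finset.Icc 1 k) (fun i => 1 - g i)
      (fun i _ => by show 1 - g i ≤ 1; linarith [hg0 i])
    calc ∏ i ∈ Finset.Icc 1 k, g i = ∏ i ∈ Finset.Icc 1 k, (1 - (1 - g i)) := by
          apply Finset.prod_congr rfl; intro i _; ring
      _ ≤ _ := this
  have h4 := S_le_sumD (q := q) hm hF n hq1 (by omega) hpn (by omega) hFb0
  rw [← hk, ← hFbdef] at h4
  -- S ≤ ΣD + m₀
  have h5 : Real.exp (-(∑ i ∈ Finset.Icc 1 k, (1 - g i)))
      ≤ Real.exp (-S + (((k * q n + p n : ℕ)) : ℝ) * Fb) := by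
    apply Real.exp_le_exp.2
    simp only [hg] at h4 ⊢
    linarith
  have hm0' : 0 ≤ (((k * q n + p n : ℕ)) : ℝ) * Fb :=
    mul_nonneg (Nat.cast_nonneg _) hFb0
  have h6 : Real.exp (-S + (((k * q n + p n : ℕ)) : ℝ) * Fb)
      ≤ Real.exp (-S) + 2 * ((((k * q n + p n : ℕ)) : ℝ) * Fb) := by
    rw [Real.exp_add]
    have he1 : Real.exp (-S) ≤ 1 := by
      apply Real.exp_le_one_iff.2
      simp only [neg_nonpos, hS]
      exact Finset.sum_nonneg fun j _ => pr_nonneg _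
    have he2 : Real.exp ((((k * q n + p n : ℕ)) : ℝ) * Fb)
        ≤ 1 + 2 * ((((k * q n + p n : ℕ)) : ℝ) * Fb) :=
      exp_le_one_add_two_mul hm0' hm0
    have he3 : 0 < Real.exp (-S) := Real.exp_pos _
    nlinarith
  have habs : pr P (allLe X (Set.Icc (q n + 1) (k * p n)) (xs n))
      ≤ ∏ i ∈ Finset.Icc 1 k, g i
        + ((k : ℝ)) * (|α n| + (q n : ℝ) * Fb) := by
    have hcast : (((k - 1 : ℕ)) : ℝ) ≤ (k : ℝ) := by
      exact_mod_cast Nat.sub_le k 1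
    have hnn : 0 ≤ |α n| + (q n : ℝ) * Fb := by positivity
    have hmono := mul_le_mul_of_nonneg_right hcast hnn
    have h22 := (abs_le.1 h2).2
    linarith
  calc pr P (allLe X (Set.Icc 1 n) (xs n))
      ≤ pr P (allLe X (Set.Icc (q n + 1) (k * p n)) (xs n)) := h1
    _ ≤ ∏ i ∈ Finset.Icc 1 k, g i + (k : ℝ) * (|α n| + (q n : ℝ) * Fb) := habs
    _ ≤ Real.exp (-S) + 2 * ((((k * q n + p n : ℕ)) : ℝ) * Fb)
        + (k : ℝ) * (|α n| + (q n : ℝ) * Fb) := by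
        have := le_trans h3 (le_trans h5 h6)
        linarith
    _ = _ := by ring

lemma key_lower (hm : ∀ i, Measurable (X i))
    (hF : ∀ i, 1 ≤ i → ∀ t : ℝ, pr P {ω | X i ω ≤ t} = F t)
    (hbd : AIMBound P X xs q α)
    (n L : ℕ) (hq1 : 1 ≤ q n) (h2q : 2 * q n ≤ L) (hLn : L ≤ n)
    (hFb0 : 0 ≤ 1 - F (xs n))
    (hc0 : (((n / L) * p n : ℕ) : ℝ) * (1 - F (xs n)) ≤ 1 / 2) :
    Real.exp (-(∑ j ∈ Finset.Icc 1 n, pr P ({ω | xs n < X j ω} ∩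
          allLe X (Set.Icc (j + 1) (j + p n)) (xs n))))
      ≤ pr P (allLe X (Set.Icc 1 n) (xs n))
        + ((q n : ℝ) + (L : ℝ)) * (1 - F (xs n))
        + ((n / L : ℕ) : ℝ) * (|α n| + (q n : ℝ) * (1 - F (xs n)))
        + ((n / L : ℕ) : ℝ) * (((L : ℝ) * (1 - F (xs n))) * ((L : ℝ) * (1 - F (xs n))))
        + 2 * ((((n / L) * p n : ℕ) : ℝ) * (1 - F (xs n))) := by
  set Fb := 1 - F (xs n) with hFbdef
  set k := n / L with hk
  set S := ∑ j ∈ Finset.Icc 1 n, pr P ({ω | xs n < X j ω} ∩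
      allLe X (Set.Icc (j + 1) (j + p n)) (xs n)) with hS
  set g : ℕ → ℝ := fun i =>
    pr P (allLe X (Set.Icc ((i - 1) * L + q n + 1) (i * L)) (xs n)) with hg
  have hL1 : 1 ≤ L := by omega
  have hk1 : 1 ≤ k := (Nat.one_le_div_iff (by omega)).2 hLn
  have hkL : k * L ≤ n := Nat.div_mul_le_self n L
  have hg0 : ∀ i, 0 ≤ g i := fun i => pr_nonneg _
  have hg1 : ∀ i, g i ≤ 1 := fun i => pr_le_one _
  -- step 1 : exp(-S) ≤ exp(-ΣD) + 2c
  have h4 := sumD_le_S (p := p) hm hF n L hq1 hL1 hLn hFb0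
  rw [← hk, ← hFbdef] at h4
  have hSD0 : 0 ≤ ∑ i ∈ Finset.Icc 1 k, (1 - g i) :=
    Finset.sum_nonneg fun i _ => by linarith [hg1 i]
  have hc0' : 0 ≤ (((k * p n : ℕ)) : ℝ) * Fb := mul_nonneg (Nat.cast_nonneg _) hFb0
  have h5 : Real.exp (-S) ≤ Real.exp (-(∑ i ∈ Finset.Icc 1 k, (1 - g i))
      + (((k * p n : ℕ)) : ℝ) * Fb) := by
    apply Real.exp_le_exp.2
    simp only [hg] at h4 ⊢
    linarith
  have h6 : Real.exp (-(∑ i ∈ Finset.Icc 1 k, (1 - g i)) + (((k * p n : ℕ)) : ℝ) * Fb)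
      ≤ Real.exp (-(∑ i ∈ Finset.Icc 1 k, (1 - g i))) + 2 * ((((k * p n : ℕ)) : ℝ) * Fb) := by
    rw [Real.exp_add]
    have he1 : Real.exp (-(∑ i ∈ Finset.Icc 1 k, (1 - g i))) ≤ 1 :=
      Real.exp_le_one_iff.2 (by linarith)
    have he2 := exp_le_one_add_two_mul hc0' hc0
    have he3 : 0 < Real.exp (-(∑ i ∈ Finset.Icc 1 k, (1 - g i))) := Real.exp_pos _
    nlinarith
  -- step 2 : exp(-ΣD) ≤ ∏ g + Σ D²   and D_i ≤ L·Fb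
  have hD : ∀ i ∈ Finset.Icc 1 k, 1 - g i ≤ (L : ℝ) * Fb := by
    intro i hi
    rw [Finset.mem_Icc] at hi
    have hosb := one_sub_block_le (P := P) hm hF (xs n)
      (a := (i - 1) * L + q n + 1) (b := i * L) (by omega)
    rw [← hFbdef] at hosb
    have hcard : ((i * L + 1 - ((i - 1) * L + q n + 1) : ℕ) : ℝ) ≤ (L : ℝ) := by
      obtain ⟨r, rfl⟩ : ∃ r, i = r + 1 := ⟨i - 1, by omega⟩
      have hmul : (r + 1) * L = r * L + L := by ring
      have : (r + 1) * L + 1 - ((r + 1 - 1) * L + q n + 1) ≤ L := by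
        simp only [Nat.add_sub_cancel]
        omega
      exact_mod_cast this
    calc 1 - g i ≤ ((i * L + 1 - ((i - 1) * L + q n + 1) : ℕ) : ℝ) * Fb := hosb
      _ ≤ (L : ℝ) * Fb := mul_le_mul_of_nonneg_right hcard hFb0
  have h7 : Real.exp (-(∑ i ∈ Finset.Icc 1 k, (1 - g i)))
      ≤ ∏ i ∈ Finset.Icc 1 k, g i + (k : ℝ) * (((L : ℝ) * Fb) * ((L : ℝ) * Fb)) := by
    have habs := abs_prod_sub_exp (Finset.Icc 1 k) (fun i => 1 - g i)
      (fun i _ => by show 0 ≤ 1 - g i; linarith [hg1 i])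
      (fun i _ => by show 1 - g i ≤ 1; linarith [hg0 i])
    have hprodeq : ∏ i ∈ Finset.Icc 1 k, (1 - (1 - g i)) = ∏ i ∈ Finset.Icc 1 k, g i := by
      apply Finset.prod_congr rfl; intro i _; ring
    rw [hprodeq] at habs
    have hsq : ∑ i ∈ Finset.Icc 1 k, (1 - g i) ^ 2
        ≤ (k : ℝ) * (((L : ℝ) * Fb) * ((L : ℝ) * Fb)) := by
      calc ∑ i ∈ Finset.Icc 1 k, (1 - g i) ^ 2
          ≤ ∑ i ∈ Finset.Icc 1 k, ((L : ℝ) * Fb) ^ 2 := by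
            apply Finset.sum_le_sum
            intro i hi
            have h01 : 0 ≤ 1 - g i := by linarith [hg1 i]
            exact pow_le_pow_left₀ h01 (hD i hi) 2
        _ = (k : ℝ) * (((L : ℝ) * Fb) * ((L : ℝ) * Fb)) := by
            rw [Finset.sum_const, nsmul_eq_mul, Nat.card_Icc, Nat.add_sub_cancel]
            ring
    have := abs_le.1 habs
    linarith [this.1]
  -- step 3 : blocking
  have h2 := blocking hm hF hbd n L hq1 h2q hFb0 k hk1 hkL
  rw [← hFbdef] at h2
  have h8 : ∏ i ∈ Finset.Icc 1 k, g i
      ≤ pr P (allLe X (Set.Icc (q n + 1) (k * L)) (xs n))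
        + (k : ℝ) * (|α n| + (q n : ℝ) * Fb) := by
    have hcast : (((k - 1 : ℕ)) : ℝ) ≤ (k : ℝ) := by exact_mod_cast Nat.sub_le k 1
    have hnn : 0 ≤ |α n| + (q n : ℝ) * Fb := by positivity
    have hmono := mul_le_mul_of_nonneg_right hcast hnn
    have h21 := (abs_le.1 h2).1
    linarith
  -- step 4 : back to full interval
  have h9 : pr P (allLe X (Set.Icc (q n + 1) (k * L)) (xs n))
      ≤ pr P (allLe X (Set.Icc 1 n) (xs n)) + ((q n : ℝ) + (L : ℝ)) * Fb := by
    have hsub : (Set.Icc (q n + 1) (k * L) : Set ℕ) ⊆ Set.Icc 1 n :=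
      Set.Icc_subset_Icc (by omega) hkL
    set s : Finset ℕ := Finset.Icc 1 (q n) ∪ Finset.Icc (k * L + 1) n with hs
    have hdiff : (Set.Icc 1 n : Set ℕ) \ Set.Icc (q n + 1) (k * L) ⊆ ↑s := by
      intro i hi
      simp only [Set.mem_diff, Set.mem_Icc] at hi
      simp only [hs, Finset.coe_union, Set.mem_union, Finset.coe_Icc, Set.mem_Icc]
      omega
    have h1q : ∀ i ∈ s, 1 ≤ i := by
      intro i hi
      simp only [hs, Finset.mem_union, Finset.mem_Icc] at hi
      omega
    have hps := pr_allLe_sub (P := P) (x := xs n) hm hF hsub s hdiff h1q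
    have hmod : k * L + n % L = n := by
      rw [hk, Nat.mul_comm]
      exact Nat.div_add_mod n L
    have hmodlt : n % L < L := Nat.mod_lt n (by omega)
    have hcards : (s.card : ℝ) ≤ (q n : ℝ) + (L : ℝ) := by
      have hc1 := Finset.card_union_le (Finset.Icc 1 (q n)) (Finset.Icc (k * L + 1) n)
      have hc2 : (Finset.Icc 1 (q n)).card = q n := by rw [Nat.card_Icc]; omega
      have hc3 : (Finset.Icc (k * L + 1) n).card ≤ L := by rw [Nat.card_Icc]; omega
      have : s.card ≤ q n + L := by rw [hs] at *; omega
      exact_mod_cast this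
    have hFbmul : (s.card : ℝ) * Fb ≤ ((q n : ℝ) + (L : ℝ)) * Fb :=
      mul_le_mul_of_nonneg_right hcards hFb0
    rw [← hFbdef] at hps
    linarith
  calc Real.exp (-S)
      ≤ Real.exp (-(∑ i ∈ Finset.Icc 1 k, (1 - g i))) + 2 * ((((k * p n : ℕ)) : ℝ) * Fb) :=
        le_trans h5 h6
    _ ≤ ∏ i ∈ Finset.Icc 1 k, g i + (k : ℝ) * (((L : ℝ) * Fb) * ((L : ℝ) * Fb))
        + 2 * ((((k * p n : ℕ)) : ℝ) * Fb) := by linarith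
    _ ≤ pr P (allLe X (Set.Icc 1 n) (xs n)) + ((q n : ℝ) + (L : ℝ)) * Fb
        + (k : ℝ) * (|α n| + (q n : ℝ) * Fb)
        + (k : ℝ) * (((L : ℝ) * Fb) * ((L : ℝ) * Fb))
        + 2 * ((((k * p n : ℕ)) : ℝ) * Fb) := by linarith
end Key

section Rpow

lemma rpow_exp_bound {u Sv : ℝ} (hu0 : 0 < u) (hu : u ≤ 1 / 2) (hS0 : 0 ≤ Sv) :
    |(1 - u) ^ (Sv / u) - Real.exp (-Sv)| ≤ Sv * (u / (1 - u)) := by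
  have h1u : 0 < 1 - u := by linarith
  rw [Real.rpow_def_of_pos h1u, mul_comm (Real.log (1 - u)) (Sv / u)]
  have hlog := neg_div_le_log_one_sub hu0 (by linarith)
  have hr0 : 0 ≤ Sv / u := div_nonneg hS0 hu0.le
  have hA1 : Sv / u * Real.log (1 - u) ≤ -Sv := by
    calc Sv / u * Real.log (1 - u) ≤ Sv / u * (-u) :=
          mul_le_mul_of_nonneg_left hlog.2 hr0
      _ = -Sv := by field_simp
  have hA2 : -(Sv / (1 - u)) ≤ Sv / u * Real.log (1 - u) := by
    have heq : Sv / u * (-u / (1 - u)) = -(Sv / (1 - u)) := by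
      field_simp
    calc -(Sv / (1 - u)) = Sv / u * (-u / (1 - u)) := heq.symm
      _ ≤ Sv / u * Real.log (1 - u) := mul_le_mul_of_nonneg_left hlog.1 hr0
  have hlip := exp_neg_lip (a := -(Sv / u * Real.log (1 - u))) (b := Sv)
    (by linarith) hS0
  rw [neg_neg] at hlip
  have habs : |-(Sv / u * Real.log (1 - u)) - Sv|
      = -(Sv / u * Real.log (1 - u)) - Sv := abs_of_nonneg (by linarith)
  have hfin : Sv / (1 - u) - Sv = Sv * (u / (1 - u)) := by
    field_simp
    ring
  calc |Real.exp (Sv / u * Real.log (1 - u)) - Real.exp (-Sv)|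
      ≤ |-(Sv / u * Real.log (1 - u)) - Sv| := hlip
    _ = -(Sv / u * Real.log (1 - u)) - Sv := habs
    _ ≤ Sv / (1 - u) - Sv := by linarith
    _ = Sv * (u / (1 - u)) := hfin

end Rpow

section SBasic
variable {Ω : Type*} [MeasurableSpace Ω] {P : Measure Ω} [IsProbabilityMeasure P]
variable {X : ℕ → Ω → ℝ} {F : ℝ → ℝ} {xs : ℕ → ℝ} {p : ℕ → ℕ}

lemma S_nonneg (n : ℕ) : 0 ≤ ∑ j ∈ Finset.Icc 1 n, pr P ({ω | xs n < X j ω} ∩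
    allLe X (Set.Icc (j + 1) (j + p n)) (xs n)) :=
  Finset.sum_nonneg fun j _ => pr_nonneg _

lemma S_le_nFb (hm : ∀ i, Measurable (X i))
    (hF : ∀ i, 1 ≤ i → ∀ t : ℝ, pr P {ω | X i ω ≤ t} = F t) (n : ℕ) :
    ∑ j ∈ Finset.Icc 1 n, pr P ({ω | xs n < X j ω} ∩
      allLe X (Set.Icc (j + 1) (j + p n)) (xs n)) ≤ (n : ℝ) * (1 - F (xs n)) := by
  calc ∑ j ∈ Finset.Icc 1 n, pr P ({ω | xs n < X j ω} ∩
        allLe X (Set.Icc (j + 1) (j + p n)) (xs n))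
      ≤ ∑ j ∈ Finset.Icc 1 n, (1 - F (xs n)) := by
        apply Finset.sum_le_sum
        intro j hj
        rw [Finset.mem_Icc] at hj
        calc pr P ({ω | xs n < X j ω} ∩ allLe X (Set.Icc (j + 1) (j + p n)) (xs n))
            ≤ pr P {ω | xs n < X j ω} := pr_mono Set.inter_subset_left
          _ = 1 - F (xs n) := pr_exceed hm hF (by omega)
    _ = (n : ℝ) * (1 - F (xs n)) := by
        rw [Finset.sum_const, nsmul_eq_mul, Nat.card_Icc, Nat.add_sub_cancel]
end SBasic

lemma le_of_sq_le_sq' {a b : ℝ} (hb : 0 ≤ b) (h : a^2 ≤ b^2) : a ≤ b := by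
  by_contra hab
  push_neg at hab
  have h2 : b * b < a * a := mul_self_lt_mul_self hb hab
  have h3 : b^2 < a^2 := by rw [pow_two, pow_two]; exact h2
  linarith only [h, h3]


set_option maxHeartbeats 1600000 in
/-- Theorem MainThm, eq. (result2): under AIM(xₙ), `n·F̄(xₙ) → τ > 0`
with `F̄(xₙ) > 0` for all `n`, and `pₙ = o(n)`, `n·αₙ = o(pₙ)`, `qₙ = o(pₙ)`, one has
`P(Mₙ ≤ xₙ) − F(xₙ)^{n·γₙ} → 0` where
`γₙ = (1/n) ∑_{j=1}^n P(M_{j,j+pₙ} ≤ xₙ | X_j > xₙ)`. -/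
theorem stmt3 {Ω : Type*} [MeasurableSpace Ω] (P : Measure Ω) [IsProbabilityMeasure P]
    (X : ℕ → Ω → ℝ) (F : ℝ → ℝ) (xs : ℕ → ℝ) (q : ℕ → ℕ) (α : ℕ → ℝ) (p : ℕ → ℕ)
    (τ : ℝ) (hτ : 0 < τ)
    (hmeas : ∀ i, Measurable (X i))
    (hF : ∀ i, 1 ≤ i → ∀ t : ℝ, pr P {ω | X i ω ≤ t} = F t)
    (hFbarpos : ∀ n, 0 < 1 - F (xs n))
    (hqpos : ∀ m, 1 ≤ q m)
    (hq : (fun n : ℕ => (q n : ℝ)) =o[atTop] (fun n : ℕ => (n : ℝ)))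
    (hα : Tendsto α atTop (nhds 0))
    (hbd : AIMBound P X xs q α)
    (hFbar : Tendsto (fun n : ℕ => (n : ℝ) * (1 - F (xs n))) atTop (nhds τ))
    (hppos : ∀ m, 1 ≤ p m)
    (hp : (fun n : ℕ => (p n : ℝ)) =o[atTop] (fun n : ℕ => (n : ℝ)))
    (hnα : (fun n : ℕ => (n : ℝ) * α n) =o[atTop] (fun n : ℕ => (p n : ℝ)))
    (hqp : (fun n : ℕ => (q n : ℝ)) =o[atTop] (fun n : ℕ => (p n : ℝ)))
    (γ : ℕ → ℝ)
    (hγ : ∀ n : ℕ, γ n = (n : ℝ)⁻¹ * ∑ j ∈ Finset.Icc 1 n,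
      pr P ({ω | xs n < X j ω} ∩ allLe X (Set.Icc (j + 1) (j + p n)) (xs n)) /
        pr P {ω | xs n < X j ω}) :
    Tendsto (fun n : ℕ =>
      pr P (allLe X (Set.Icc 1 n) (xs n)) - F (xs n) ^ ((n : ℝ) * γ n))
      atTop (nhds 0) := by
  have hppos' : ∀ m, (0:ℝ) < p m := fun m => by exact_mod_cast hppos m
  have T_nαp : Tendsto (fun n : ℕ => (n : ℝ) * α n / (p n : ℝ)) atTop (nhds 0) := by
    refine (isLittleO_iff_tendsto' ?_).1 hnα
    filter_upwards with n h
    exact absurd h (hppos' n).ne'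
  have T_qp : Tendsto (fun n : ℕ => (q n : ℝ) / (p n : ℝ)) atTop (nhds 0) := by
    refine (isLittleO_iff_tendsto' ?_).1 hqp
    filter_upwards with n h
    exact absurd h (hppos' n).ne'
  have T_pn : Tendsto (fun n : ℕ => (p n : ℝ) / (n : ℝ)) atTop (nhds 0) := by
    refine (isLittleO_iff_tendsto' ?_).1 hp
    filter_upwards [eventually_ge_atTop 1] with n hn h
    have hn0 : (0:ℝ) < n := by exact_mod_cast hn
    exact absurd h hn0.ne'
  have T_F0 : Tendsto (fun n : ℕ => 1 - F (xs n)) atTop (nhds 0) := by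
    have h1 : Tendsto (fun n : ℕ => ((n : ℝ) * (1 - F (xs n))) * (n : ℝ)⁻¹) atTop
        (nhds (τ * 0)) :=
      hFbar.mul (tendsto_inv_atTop_zero.comp tendsto_natCast_atTop_atTop)
    rw [mul_zero] at h1
    apply h1.congr'
    filter_upwards [eventually_ge_atTop 1] with n hn
    have hn0 : (n:ℝ) ≠ 0 := by
      have : (0:ℝ) < n := by exact_mod_cast hn
      exact this.ne'
    field_simp
  rw [NormedAddCommGroup.tendsto_nhds_zero]
  intro ε hε
  have hτ1 : (0:ℝ) < τ + 1 := by linarith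
  set ε' := min (ε / (20 + 2 * τ)) (1/8) with hε'
  have hε'pos : 0 < ε' := lt_min (div_pos hε (by linarith)) (by norm_num)
  have hε'ε : (20 + 2*τ) * ε' ≤ ε := by
    calc (20 + 2*τ) * ε' ≤ (20 + 2*τ) * (ε/(20 + 2*τ)) :=
          mul_le_mul_of_nonneg_left (min_le_left _ _) (by linarith)
      _ = ε := by field_simp
  have hε'18 : ε' ≤ 1/8 := min_le_right _ _
  set δ := ε' / (τ + 1) with hδ
  have hδ0 : 0 < δ := div_pos hε'pos hτ1
  have hδτε : δ * (τ + 1) = ε' := by rw [hδ]; field_simp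
  have hδε' : δ ≤ ε' := by
    rw [hδ, div_le_iff₀ hτ1]
    have := mul_nonneg hε'pos.le hτ.le
    linarith only [this]
  have hδ18 : δ ≤ 1/8 := le_trans hδε' hε'18
  have E2 := NormedAddCommGroup.tendsto_nhds_zero.1 T_nαp ε' hε'pos
  have E3 := NormedAddCommGroup.tendsto_nhds_zero.1 T_qp δ hδ0
  have E4 := NormedAddCommGroup.tendsto_nhds_zero.1 T_pn (δ^2) (by positivity)
  have E5 := hFbar.eventually (eventually_abs_sub_lt τ one_pos)
  have E6 := NormedAddCommGroup.tendsto_nhds_zero.1 T_F0 (min (1/2) (δ/2))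
    (lt_min (by norm_num) (by linarith))
  filter_upwards [E2, E3, E4, E5, E6, eventually_ge_atTop 2] with n e2 e3 e4 e5 e6 hn2
  rw [Real.norm_eq_abs] at e2 e3 e4 e6 ⊢
  -- basic per-n facts
  have hFb0 : (0:ℝ) < 1 - F (xs n) := hFbarpos n
  have hn2' : (2:ℝ) ≤ n := by exact_mod_cast hn2
  have hn0 : (0:ℝ) < n := by linarith
  have hp0 : (0:ℝ) < p n := hppos' n
  rw [abs_of_pos hFb0] at e6
  have hFbhalf : 1 - F (xs n) ≤ 1/2 := le_of_lt (lt_of_lt_of_le e6 (min_le_left _ _))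
  have hFbδ2 : 1 - F (xs n) ≤ δ/2 := le_of_lt (lt_of_lt_of_le e6 (min_le_right _ _))
  have hnFb : (n:ℝ) * (1 - F (xs n)) ≤ τ + 1 := by
    have := (abs_lt.1 e5).2; linarith
  have hnFb0 : (0:ℝ) ≤ (n:ℝ) * (1 - F (xs n)) := by positivity
  have hqpδ : (q n : ℝ) / p n < δ := by
    rwa [abs_of_nonneg (by positivity)] at e3
  have hpnδ : (p n : ℝ) / n < δ^2 := by
    rwa [abs_of_nonneg (by positivity)] at e4
  have hqltp : (q n : ℝ) < δ * p n := by rwa [div_lt_iff₀ hp0] at hqpδ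
  have hq2p : 2 * q n ≤ p n := by
    have h1 : (2 * q n : ℝ) ≤ (p n : ℝ) := by
      push_cast
      have hδp : δ * (p n : ℝ) ≤ (1/8) * (p n : ℝ) := mul_le_mul_of_nonneg_right hδ18 hp0.le
      linarith only [hqltp, hδp, hp0]
    exact_mod_cast h1
  have hpltn : (p n : ℝ) < δ^2 * n := by rwa [div_lt_iff₀ hn0] at hpnδ
  have hδ21 : δ^2 ≤ 1 := by
    have h := mul_le_mul hδ18 hδ18 hδ0.le (by norm_num)
    have h2 : δ^2 = δ * δ := pow_two δ
    linarith only [h, h2]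
  have hpn : p n ≤ n := by
    have h1 : (p n : ℝ) ≤ (n : ℝ) := by
      linarith only [hpltn, mul_le_mul_of_nonneg_right hδ21 hn0.le, hn0]
    exact_mod_cast h1
  have hpncast : (p n : ℝ) ≤ (n:ℝ) := by exact_mod_cast hpn
  -- sqrt / L facts
  have hpn0 : (0:ℝ) < (p n : ℝ) * n := by positivity
  set s := Real.sqrt ((p n : ℝ) * n) with hs
  have hs0 : 0 < s := Real.sqrt_pos.2 hpn0
  have hs2 : s^2 = (p n : ℝ) * n := Real.sq_sqrt hpn0.le
  set Ln := Nat.sqrt (p n * n) + 1 with hLn'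
  have hLn0 : (0:ℝ) < (Ln : ℝ) := by
    have : 0 < Ln := Nat.succ_pos _
    exact_mod_cast this
  have hsL : s ≤ (Ln : ℝ) := by
    have h1 : p n * n < Ln * Ln := Nat.lt_succ_sqrt (p n * n)
    have h2 : (p n : ℝ) * n ≤ (Ln : ℝ) * Ln := by exact_mod_cast h1.le
    apply le_of_sq_le_sq' hLn0.le
    rw [hs2]
    linarith only [h2]
  have hLs : (Ln : ℝ) ≤ s + 1 := by
    have h1 : Nat.sqrt (p n * n) ^ 2 ≤ p n * n := Nat.sqrt_le' _
    have h2 : ((Nat.sqrt (p n * n) : ℕ) : ℝ) ^ 2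
        ≤ (p n : ℝ) * n := by exact_mod_cast h1
    have h3 : ((Nat.sqrt (p n * n) : ℕ) : ℝ) ≤ s := by
      apply le_of_sq_le_sq' hs0.le
      rw [hs2]
      linarith only [h2]

    rw [hLn']
    push_cast
    linarith
  have hsδn : s ≤ δ * n := by
    have h1 : (p n : ℝ) * n ≤ (δ * n)^2 := by
      have h0 := mul_le_mul_of_nonneg_right hpltn.le hn0.le
      have h2 : (δ * (n:ℝ))^2 = δ^2 * (n:ℝ) * (n:ℝ) := by ring
      linarith only [h0, h2]
    apply le_of_sq_le_sq' (mul_nonneg hδ0.le hn0.le)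
    rw [hs2]
    exact h1
  have hpls : (p n : ℝ) ≤ s := by
    apply le_of_sq_le_sq' hs0.le
    rw [hs2]
    have h0 := mul_le_mul_of_nonneg_left hpncast hp0.le
    have h2 : ((p n : ℝ))^2 = (p n : ℝ) * (p n : ℝ) := pow_two _
    linarith only [h0, h2]
  have hpLn : p n ≤ Ln := by
    have h1 : (p n : ℝ) ≤ (Ln : ℝ) := le_trans hpls hsL
    exact_mod_cast h1
  have hq2L : 2 * q n ≤ Ln := le_trans hq2p hpLn
  have hLnn : Ln ≤ n := by
    have h1 : (Ln : ℝ) ≤ (n : ℝ) := by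
      linarith only [hLs, hsδn, mul_le_mul_of_nonneg_right hδ18 hn0.le, hn2']
    exact_mod_cast h1
  -- division facts
  have hKpp : ((n / p n : ℕ) : ℝ) * (p n : ℝ) ≤ (n : ℝ) := by
    exact_mod_cast Nat.div_mul_le_self n (p n)
  have hKLL : ((n / Ln : ℕ) : ℝ) * (Ln : ℝ) ≤ (n : ℝ) := by
    exact_mod_cast Nat.div_mul_le_self n Ln
  have hKp0 : (0:ℝ) ≤ ((n / p n : ℕ) : ℝ) := Nat.cast_nonneg _
  have hKL0 : (0:ℝ) ≤ ((n / Ln : ℕ) : ℝ) := Nat.cast_nonneg _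
  have hKLKp : ((n / Ln : ℕ) : ℝ) ≤ ((n / p n : ℕ) : ℝ) := by
    have := Nat.div_le_div_left (a := n) hpLn (hppos n)
    exact_mod_cast this
  have hKpdiv : ((n / p n : ℕ) : ℝ) ≤ (n : ℝ) / p n := (le_div_iff₀ hp0).2 hKpp
  have hKLdiv : ((n / Ln : ℕ) : ℝ) ≤ (n : ℝ) / Ln := (le_div_iff₀ hLn0).2 hKLL
  have hα0 : (0:ℝ) ≤ |α n| := abs_nonneg _
  -- atomic bounds
  have bnd_a : ((n / p n : ℕ) : ℝ) * |α n| ≤ ε' := by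
    have h1 : ((n / p n : ℕ) : ℝ) * |α n| ≤ ((n : ℝ) / p n) * |α n| :=
      mul_le_mul_of_nonneg_right hKpdiv hα0
    have h2 : ((n : ℝ) / p n) * |α n| = |(n : ℝ) * α n / p n| := by
      rw [abs_div, abs_mul, abs_of_nonneg hn0.le, abs_of_nonneg hp0.le]
      ring
    rw [h2] at h1
    linarith
  have bnd_b : ((n / p n : ℕ) : ℝ) * (q n : ℝ) * (1 - F (xs n)) ≤ ε' := by
    have h1 : ((n / p n : ℕ) : ℝ) * (q n : ℝ) * (1 - F (xs n))
        ≤ ((n : ℝ) / p n) * (q n : ℝ) * (1 - F (xs n)) := by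
      apply mul_le_mul_of_nonneg_right _ hFb0.le
      exact mul_le_mul_of_nonneg_right hKpdiv (Nat.cast_nonneg _)
    have h2 : ((n : ℝ) / p n) * (q n : ℝ) * (1 - F (xs n))
        = ((q n : ℝ) / p n) * ((n : ℝ) * (1 - F (xs n))) := by
      field_simp
    have h3 : ((q n : ℝ) / p n) * ((n : ℝ) * (1 - F (xs n))) ≤ δ * (τ + 1) :=
      mul_le_mul hqpδ.le hnFb hnFb0 hδ0.le
    rw [h2] at h1
    linarith [hδτε]
  have bnd_c : (p n : ℝ) * (1 - F (xs n)) ≤ ε' := by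
    have h2 : (p n : ℝ) * (1 - F (xs n))
        = ((p n : ℝ) / n) * ((n : ℝ) * (1 - F (xs n))) := by
      field_simp
    have hδ2δ : δ^2 ≤ δ := by
      have h0 : δ ≤ 1 := le_trans hδ18 (by norm_num)
      have h1 := mul_le_mul_of_nonneg_left h0 hδ0.le
      have h2 : δ^2 = δ * δ := pow_two δ
      linarith only [h1, h2]
    have h3 : ((p n : ℝ) / n) * ((n : ℝ) * (1 - F (xs n))) ≤ δ * (τ + 1) :=
      mul_le_mul (le_trans hpnδ.le hδ2δ) hnFb hnFb0 hδ0.le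
    rw [h2]
    linarith [hδτε]
  have bnd_d : (q n : ℝ) * (1 - F (xs n)) ≤ ε' := by
    have hqlep : (q n : ℝ) ≤ (p n : ℝ) := by
      have : (q n:ℝ) ≥ 0 := Nat.cast_nonneg _
      have h2q' : (2 * q n : ℝ) ≤ (p n : ℝ) := by exact_mod_cast hq2p
      push_cast at h2q'
      linarith
    have := mul_le_mul_of_nonneg_right hqlep hFb0.le
    linarith [bnd_c]
  have bnd_s : s * (1 - F (xs n)) ≤ ε' := by
    have h1 : s * (1 - F (xs n)) ≤ δ * (n:ℝ) * (1 - F (xs n)) :=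
      mul_le_mul_of_nonneg_right hsδn hFb0.le
    have h2 : δ * (n:ℝ) * (1 - F (xs n)) = δ * ((n:ℝ) * (1 - F (xs n))) := by ring
    have h3 : δ * ((n:ℝ) * (1 - F (xs n))) ≤ δ * (τ + 1) :=
      mul_le_mul_of_nonneg_left hnFb hδ0.le
    rw [h2] at h1
    linarith [hδτε]
  have hFbε' : 1 - F (xs n) ≤ ε' := by linarith [hδε', hFbδ2, hδ0.le]
  have bnd_e : (Ln : ℝ) * (1 - F (xs n)) ≤ 2 * ε' := by
    have h1 : (Ln : ℝ) * (1 - F (xs n)) ≤ (s + 1) * (1 - F (xs n)) :=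
      mul_le_mul_of_nonneg_right hLs hFb0.le
    have h2 : (s + 1) * (1 - F (xs n)) = s * (1 - F (xs n)) + (1 - F (xs n)) := by ring
    linarith only [bnd_s, h1, hFbε', h2]
  have bnd_KLp : ((n / Ln : ℕ) : ℝ) * (p n : ℝ) * (1 - F (xs n)) ≤ ε' := by
    have h1 : (n:ℝ) / Ln ≤ (n:ℝ) / s := by
      apply div_le_div_of_nonneg_left hn0.le hs0 hsL
    have h2 : ((n:ℝ) / s) * (p n : ℝ) = s := by
      rw [div_mul_eq_mul_div, div_eq_iff hs0.ne']
      linear_combination -hs2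
    have h3 : ((n / Ln : ℕ) : ℝ) * (p n : ℝ) ≤ s := by
      calc ((n / Ln : ℕ) : ℝ) * (p n : ℝ) ≤ ((n:ℝ) / s) * (p n : ℝ) :=
            mul_le_mul_of_nonneg_right (le_trans hKLdiv h1) hp0.le
        _ = s := h2
    calc ((n / Ln : ℕ) : ℝ) * (p n : ℝ) * (1 - F (xs n))
        ≤ s * (1 - F (xs n)) := mul_le_mul_of_nonneg_right h3 hFb0.le
      _ ≤ ε' := bnd_s
  have bnd_KL2 : ((n / Ln : ℕ) : ℝ) * (((Ln : ℝ) * (1 - F (xs n))) * ((Ln : ℝ) * (1 - F (xs n))))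
      ≤ (τ + 1) * (2 * ε') := by
    have h1 : ((n / Ln : ℕ) : ℝ) * ((Ln : ℝ) * (1 - F (xs n))) ≤ (n:ℝ) * (1 - F (xs n)) := by
      calc ((n / Ln : ℕ) : ℝ) * ((Ln : ℝ) * (1 - F (xs n)))
          = (((n / Ln : ℕ) : ℝ) * (Ln : ℝ)) * (1 - F (xs n)) := by ring
        _ ≤ (n:ℝ) * (1 - F (xs n)) := mul_le_mul_of_nonneg_right hKLL hFb0.le
    have hLF0 : (0:ℝ) ≤ (Ln : ℝ) * (1 - F (xs n)) := by positivity
    calc ((n / Ln : ℕ) : ℝ) * (((Ln : ℝ) * (1 - F (xs n))) * ((Ln : ℝ) * (1 - F (xs n))))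
        = (((n / Ln : ℕ) : ℝ) * ((Ln : ℝ) * (1 - F (xs n)))) * ((Ln : ℝ) * (1 - F (xs n))) := by
          ring
      _ ≤ ((n:ℝ) * (1 - F (xs n))) * (2 * ε') := by
          apply mul_le_mul h1 bnd_e hLF0 hnFb0
      _ ≤ (τ + 1) * (2 * ε') := by
          apply mul_le_mul_of_nonneg_right hnFb (by positivity)
  have bnd_KLα : ((n / Ln : ℕ) : ℝ) * |α n| ≤ ε' :=
    le_trans (mul_le_mul_of_nonneg_right hKLKp hα0) bnd_a
  have bnd_KLq : ((n / Ln : ℕ) : ℝ) * (q n : ℝ) * (1 - F (xs n)) ≤ ε' := by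
    have h1 : ((n / Ln : ℕ) : ℝ) * (q n : ℝ) * (1 - F (xs n))
        ≤ ((n / p n : ℕ) : ℝ) * (q n : ℝ) * (1 - F (xs n)) := by
      apply mul_le_mul_of_nonneg_right _ hFb0.le
      exact mul_le_mul_of_nonneg_right hKLKp (Nat.cast_nonneg _)
    linarith [bnd_b]
  -- conditions for the key lemmas
  have hm0 : (((n / p n) * q n + p n : ℕ) : ℝ) * (1 - F (xs n)) ≤ 1/2 := by
    push_cast
    linarith only [bnd_b, bnd_c, hε'18]
  have hc0 : (((n / Ln) * p n : ℕ) : ℝ) * (1 - F (xs n)) ≤ 1/2 := by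
    push_cast
    linarith only [bnd_KLp, hε'18]
  have h_up := key_upper (α := α) hmeas hF hbd n (hqpos n) hq2p hpn hFb0.le hm0
  have h_lo := key_lower (α := α) hmeas hF hbd n Ln (hqpos n) hq2L hLnn hFb0.le hc0
  push_cast at h_up h_lo
  have hcastLn : ((Ln : ℕ) : ℝ) = ((Nat.sqrt (p n * n) : ℕ) : ℝ) + 1 := by
    rw [hLn']; push_cast; ring
  -- rpow comparison
  have hS0 := S_nonneg (P := P) (X := X) (xs := xs) (p := p) n
  have hSle := S_le_nFb (P := P) (xs := xs) (p := p) hmeas hF n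
  have hgam : (n:ℝ) * γ n = (∑ j ∈ Finset.Icc 1 n, pr P ({ω | xs n < X j ω} ∩
      allLe X (Set.Icc (j + 1) (j + p n)) (xs n))) / (1 - F (xs n)) := by
    rw [hγ n]
    have hcongr : ∀ j ∈ Finset.Icc 1 n,
        pr P ({ω | xs n < X j ω} ∩ allLe X (Set.Icc (j + 1) (j + p n)) (xs n)) /
          pr P {ω | xs n < X j ω}
        = pr P ({ω | xs n < X j ω} ∩ allLe X (Set.Icc (j + 1) (j + p n)) (xs n)) /
          (1 - F (xs n)) := by
      intro j hj
      rw [Finset.mem_Icc] at hj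
      rw [pr_exceed hmeas hF hj.1]
    rw [Finset.sum_congr rfl hcongr, ← Finset.sum_div, ← mul_assoc,
      mul_inv_cancel₀ hn0.ne', one_mul]
  have hrpow : |F (xs n) ^ ((n:ℝ) * γ n) - Real.exp (-(∑ j ∈ Finset.Icc 1 n,
      pr P ({ω | xs n < X j ω} ∩ allLe X (Set.Icc (j + 1) (j + p n)) (xs n))))| ≤ ε' := by
    have h1 := rpow_exp_bound (u := 1 - F (xs n)) (Sv := ∑ j ∈ Finset.Icc 1 n,
      pr P ({ω | xs n < X j ω} ∩ allLe X (Set.Icc (j + 1) (j + p n)) (xs n)))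
      hFb0 hFbhalf hS0
    rw [sub_sub_cancel] at h1
    rw [hgam]
    have hF12 : (1:ℝ)/2 ≤ F (xs n) := by linarith
    have h2 : (1 - F (xs n)) / F (xs n) ≤ δ := by
      have hdiv : (1 - F (xs n)) / F (xs n) ≤ (1 - F (xs n)) / (1/2) := by
        apply div_le_div_of_nonneg_left hFb0.le (by norm_num) hF12
      have : (1 - F (xs n)) / (1/2) = 2 * (1 - F (xs n)) := by ring
      rw [this] at hdiv
      linarith [hFbδ2]
    have h3 : (∑ j ∈ Finset.Icc 1 n, pr P ({ω | xs n < X j ω} ∩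
        allLe X (Set.Icc (j + 1) (j + p n)) (xs n))) * ((1 - F (xs n)) / F (xs n))
        ≤ (τ + 1) * δ := by
      apply mul_le_mul (le_trans hSle hnFb) h2 _ (by linarith)
      positivity
    calc |F (xs n) ^ ((∑ j ∈ Finset.Icc 1 n, pr P ({ω | xs n < X j ω} ∩
          allLe X (Set.Icc (j + 1) (j + p n)) (xs n))) / (1 - F (xs n)))
          - Real.exp (-(∑ j ∈ Finset.Icc 1 n, pr P ({ω | xs n < X j ω} ∩
            allLe X (Set.Icc (j + 1) (j + p n)) (xs n))))|
        ≤ _ := h1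
      _ ≤ (τ + 1) * δ := h3
      _ = ε' := by rw [mul_comm]; exact hδτε
  -- final combination
  have hup2 : pr P (allLe X (Set.Icc 1 n) (xs n)) - Real.exp (-(∑ j ∈ Finset.Icc 1 n,
      pr P ({ω | xs n < X j ω} ∩ allLe X (Set.Icc (j + 1) (j + p n)) (xs n)))) ≤ 6 * ε' := by
    linarith only [bnd_a, bnd_b, bnd_c, h_up]
  have hlo2 : Real.exp (-(∑ j ∈ Finset.Icc 1 n,
      pr P ({ω | xs n < X j ω} ∩ allLe X (Set.Icc (j + 1) (j + p n)) (xs n))))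
      - pr P (allLe X (Set.Icc 1 n) (xs n)) ≤ (9 + 2*τ) * ε' := by
    linarith only [bnd_d, bnd_e, bnd_KLα, bnd_KLq, bnd_KL2, bnd_KLp, h_lo]
  have habs := abs_le.1 hrpow
  have hτε' : 0 ≤ τ * ε' := mul_nonneg hτ.le hε'pos.le
  rw [abs_lt]
  constructor
  · linarith only [habs.2, hlo2, hε'ε, hε'pos, hτε']
  · linarith only [habs.1, hup2, hε'ε, hε'pos, hτε']
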